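/- Let n, r be positive integers, λ > 0, Ω ⊆ {1,…,n}×{1,…,n}, and M ∈ ℝ^{n×n}. Let L_ncvx ∈ ℝ^{n×n} have rank r with compact SVD L_ncvx = UΣVᵀ and tangent space T, and suppose θ := ‖P_Ω(L_ncvx − M)‖_F > 0. Define R ∈ ℝ^{n×n} by θ^{−1}·P_Ω(L_ncvx − M) = −λ·(UVᵀ + R), set ρ = ‖P_T(R)‖_F, and assume ‖P_{T⊥}(R)‖ ≤ 1/2. Let L_cvx be any minimizer over L ∈ ℝ^{n×n} of F(L) = ‖P_Ω(L − M)‖_F + λ‖L‖_*, and set Δ = L_cvx − L_ncvx. Then (‖P_Ω(L_cvx − M)‖_F − ‖P_Ω(L_ncvx − M)‖_F)² ≤ λ²·(√r + 2ρ)²·‖P_T(Δ)‖_F². -/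

import Mathlib

open MeasureTheory ProbabilityTheory Matrix
open scoped ENNReal

noncomputable section

/-- Frobenius norm of a real matrix. -/
def frobNorm {n m : ℕ} (A : Matrix (Fin n) (Fin m) ℝ) : ℝ :=
  Real.sqrt (∑ i, ∑ j, (A i j) ^ 2)

/-- Entrywise sup norm (largest absolute value of an entry). -/
def infNorm {n m : ℕ} (A : Matrix (Fin n) (Fin m) ℝ) : ℝ :=
  ⨆ i, ⨆ j, |A i j|

/-- Largest Euclidean norm of a row. -/
def row2InfNorm {n m : ℕ} (A : Matrix (Fin n) (Fin m) ℝ) : ℝ :=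
  ⨆ i, Real.sqrt (∑ j, (A i j) ^ 2)

/-- The (unsorted) singular values of a real matrix: square roots of the
eigenvalues of `Aᵀ * A`. -/
def singVal {n m : ℕ} (A : Matrix (Fin n) (Fin m) ℝ) : Fin m → ℝ :=
  fun j => Real.sqrt (((show (Aᵀ * A).IsHermitian by simpa [Matrix.conjTranspose_eq_transpose_of_trivial] using Matrix.isHermitian_conjTranspose_mul_self A)).eigenvalues j)

/-- Spectral norm: the largest singular value. -/
def specNorm {n m : ℕ} (A : Matrix (Fin n) (Fin m) ℝ) : ℝ :=
  ⨆ j, singVal A j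

/-- Nuclear norm: the sum of the singular values. -/
def nucNorm {n m : ℕ} (A : Matrix (Fin n) (Fin m) ℝ) : ℝ :=
  ∑ j, singVal A j

open Classical in
/-- Projection onto the observed entries. -/
def POmega {n : ℕ} (S : Set (Fin n × Fin n)) (A : Matrix (Fin n) (Fin n) ℝ) :
    Matrix (Fin n) (Fin n) ℝ :=
  fun i j => if (i, j) ∈ S then A i j else 0

/-- Trace inner product of two real matrices. -/
def minner {n m : ℕ} (A B : Matrix (Fin n) (Fin m) ℝ) : ℝ :=
  ∑ i, ∑ j, A i j * B i j

/-- The square-root matrix completion objective. -/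
def sqF {n : ℕ} (S : Set (Fin n × Fin n)) (M : Matrix (Fin n) (Fin n) ℝ) (lam : ℝ)
    (L : Matrix (Fin n) (Fin n) ℝ) : ℝ :=
  frobNorm (POmega S (L - M)) + lam * nucNorm L

/-- `X`-gradient of the nonconvex objective `g`. -/
def gradX {n r : ℕ} (S : Set (Fin n × Fin n)) (M : Matrix (Fin n) (Fin n) ℝ) (lam : ℝ)
    (X Y : Matrix (Fin n) (Fin r) ℝ) : Matrix (Fin n) (Fin r) ℝ :=
  (frobNorm (POmega S (X * Yᵀ - M)))⁻¹ • (POmega S (X * Yᵀ - M) * Y) + lam • X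

/-- `Y`-gradient of the nonconvex objective `g`. -/
def gradY {n r : ℕ} (S : Set (Fin n × Fin n)) (M : Matrix (Fin n) (Fin n) ℝ) (lam : ℝ)
    (X Y : Matrix (Fin n) (Fin r) ℝ) : Matrix (Fin n) (Fin r) ℝ :=
  (frobNorm (POmega S (X * Yᵀ - M)))⁻¹ • ((POmega S (X * Yᵀ - M))ᵀ * X) + lam • Y

/-- Frobenius norm of the full gradient of `g`. -/
def gradNorm {n r : ℕ} (S : Set (Fin n × Fin n)) (M : Matrix (Fin n) (Fin n) ℝ) (lam : ℝ)
    (X Y : Matrix (Fin n) (Fin r) ℝ) : ℝ :=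
  Real.sqrt ((frobNorm (gradX S M lam X Y)) ^ 2 + (frobNorm (gradY S M lam X Y)) ^ 2)

/-- Orthogonal projection onto the tangent space `T = {U Aᵀ + B Vᵀ}` (for `U, V` with
orthonormal columns), with respect to the trace inner product. -/
def projT {n r : ℕ} (U V : Matrix (Fin n) (Fin r) ℝ) (A : Matrix (Fin n) (Fin n) ℝ) :
    Matrix (Fin n) (Fin n) ℝ :=
  U * Uᵀ * A + A * (V * Vᵀ) - U * Uᵀ * A * (V * Vᵀ)

/-- Orthogonal projection onto the orthogonal complement of the tangent space. -/
def projTperp {n r : ℕ} (U V : Matrix (Fin n) (Fin r) ℝ) (A : Matrix (Fin n) (Fin n) ℝ) :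
    Matrix (Fin n) (Fin n) ℝ :=
  A - projT U V A

open Classical in
/-- Indicator (as a real random variable) that an entry is observed. -/
def obsInd {n : ℕ} {Ω₀ : Type} (Obs : Ω₀ → Set (Fin n × Fin n)) (k : Fin n × Fin n)
    (ω : Ω₀) : ℝ :=
  if k ∈ Obs ω then 1 else 0

end

namespace SqrtMC
open Matrix

variable {a b c d n m r : ℕ}

lemma hermT {d e : ℕ} (A : Matrix (Fin d) (Fin e) ℝ) : (Aᵀ * A).IsHermitian := by
  simpa [Matrix.conjTranspose_eq_transpose_of_trivial] using
    Matrix.isHermitian_conjTranspose_mul_self A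

lemma frobNorm_nonneg (A : Matrix (Fin n) (Fin m) ℝ) : 0 ≤ frobNorm A := Real.sqrt_nonneg _

lemma minner_self (A : Matrix (Fin n) (Fin m) ℝ) : minner A A = frobNorm A ^ 2 := by
  rw [frobNorm, Real.sq_sqrt]
  · simp [minner, sq]
  · positivity

lemma frobNorm_eq_sqrt (A : Matrix (Fin n) (Fin m) ℝ) :
    frobNorm A = Real.sqrt (minner A A) := by
  simp [frobNorm, minner, sq]

lemma minner_comm (A B : Matrix (Fin n) (Fin m) ℝ) : minner A B = minner B A := by
  simp [minner, mul_comm]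

lemma minner_add_right (A B C : Matrix (Fin n) (Fin m) ℝ) :
    minner A (B + C) = minner A B + minner A C := by
  simp [minner, mul_add, Finset.sum_add_distrib]

lemma minner_add_left (A B C : Matrix (Fin n) (Fin m) ℝ) :
    minner (A + B) C = minner A C + minner B C := by
  simp [minner, add_mul, Finset.sum_add_distrib]

lemma minner_smul_left (t : ℝ) (A B : Matrix (Fin n) (Fin m) ℝ) :
    minner (t • A) B = t * minner A B := by
  simp [minner, Finset.mul_sum, mul_assoc]

lemma minner_cs (A B : Matrix (Fin n) (Fin m) ℝ) :
    minner A B ≤ frobNorm A * frobNorm B := by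
  have h := Real.sum_mul_le_sqrt_mul_sqrt (Finset.univ : Finset (Fin n × Fin m))
    (fun p => A p.1 p.2) (fun p => B p.1 p.2)
  simpa [minner, frobNorm, Fintype.sum_prod_type] using h

lemma abs_minner_le (A B : Matrix (Fin n) (Fin m) ℝ) :
    |minner A B| ≤ frobNorm A * frobNorm B := by
  rcases abs_cases (minner A B) with ⟨h, _⟩ | ⟨h, _⟩
  · rw [h]; exact minner_cs A B
  · rw [h]
    have h2 := minner_cs ((-1 : ℝ) • A) B
    rw [minner_smul_left] at h2
    have : frobNorm ((-1 : ℝ) • A) = frobNorm A := by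
      simp [frobNorm]
    rw [this] at h2; linarith

lemma minner_eq_trace (A B : Matrix (Fin n) (Fin m) ℝ) :
    minner A B = (Aᵀ * B).trace := by
  rw [Matrix.trace]
  simp only [Matrix.diag, Matrix.mul_apply, Matrix.transpose_apply]
  rw [Finset.sum_comm]
  rfl

lemma minner_mul_left (X : Matrix (Fin a) (Fin b) ℝ) (B : Matrix (Fin b) (Fin c) ℝ)
    (C : Matrix (Fin a) (Fin c) ℝ) : minner (X * B) C = minner B (Xᵀ * C) := by
  rw [minner_eq_trace, minner_eq_trace, Matrix.transpose_mul, Matrix.mul_assoc]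

lemma minner_mul_right (B : Matrix (Fin a) (Fin b) ℝ) (Y : Matrix (Fin b) (Fin c) ℝ)
    (C : Matrix (Fin a) (Fin c) ℝ) : minner (B * Y) C = minner B (C * Yᵀ) := by
  rw [minner_eq_trace, minner_eq_trace, Matrix.transpose_mul, Matrix.mul_assoc,
    Matrix.trace_mul_comm, Matrix.mul_assoc]


/-- eigenvector matrix of `Aᴴ * A`. -/
noncomputable def QM {d e : ℕ} (A : Matrix (Fin d) (Fin e) ℝ) : Matrix (Fin e) (Fin e) ℝ :=
  ((hermT A).eigenvectorUnitary : Matrix (Fin e) (Fin e) ℝ)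

noncomputable def lamv {d e : ℕ} (A : Matrix (Fin d) (Fin e) ℝ) : Fin e → ℝ :=
  (hermT A).eigenvalues

lemma lamv_nonneg (A : Matrix (Fin d) (Fin e) ℝ) (j : Fin e) : 0 ≤ lamv A j :=
  Matrix.eigenvalues_conjTranspose_mul_self_nonneg A j

lemma singVal_eq (A : Matrix (Fin d) (Fin e) ℝ) : singVal A = fun j => Real.sqrt (lamv A j) := rfl

lemma realCT (M : Matrix (Fin d) (Fin e) ℝ) : Mᴴ = Mᵀ :=
  Matrix.conjTranspose_eq_transpose_of_trivial M

lemma QM_mul_transpose (A : Matrix (Fin d) (Fin e) ℝ) : QM A * (QM A)ᵀ = 1 := by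
  have h := (Matrix.mem_unitaryGroup_iff).mp
    ((hermT A).eigenvectorUnitary).2
  simpa [QM, Matrix.star_eq_conjTranspose, realCT] using h

lemma transpose_mul_QM (A : Matrix (Fin d) (Fin e) ℝ) : (QM A)ᵀ * QM A = 1 := by
  have h := (Matrix.mem_unitaryGroup_iff').mp
    ((hermT A).eigenvectorUnitary).2
  simpa [QM, Matrix.star_eq_conjTranspose, realCT] using h

lemma spectral (A : Matrix (Fin d) (Fin e) ℝ) :
    Aᵀ * A = QM A * Matrix.diagonal (lamv A) * (QM A)ᵀ := by
  have h := (hermT A).spectral_theorem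
  simpa [QM, lamv, Matrix.star_eq_conjTranspose, realCT, RCLike.ofReal_real_eq_id,
    Function.id_comp] using h

lemma QM_conj (A : Matrix (Fin d) (Fin e) ℝ) :
    (QM A)ᵀ * (Aᵀ * A) * QM A = Matrix.diagonal (lamv A) := by
  rw [spectral A]
  simp only [Matrix.mul_assoc, transpose_mul_QM, Matrix.mul_one]
  rw [← Matrix.mul_assoc, transpose_mul_QM, Matrix.one_mul]


lemma dot_mv (M : Matrix (Fin d) (Fin e) ℝ) (x : Fin e → ℝ) (y : Fin d → ℝ) :
    (M *ᵥ x) ⬝ᵥ y = x ⬝ᵥ (Mᵀ *ᵥ y) := by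
  simp only [Matrix.mulVec, dotProduct, Matrix.transpose_apply, Finset.sum_mul,
    Finset.mul_sum]
  rw [Finset.sum_comm]
  apply Finset.sum_congr rfl; intro i _; apply Finset.sum_congr rfl; intro j _; ring

lemma mv_dot (M : Matrix (Fin d) (Fin e) ℝ) (x : Fin e → ℝ) (y : Fin d → ℝ) :
    y ⬝ᵥ (M *ᵥ x) = (Mᵀ *ᵥ y) ⬝ᵥ x := by
  rw [dotProduct_comm, dot_mv, dotProduct_comm]

lemma col_sum_eq (M N : Matrix (Fin d) (Fin e) ℝ) (j : Fin e) :
    ∑ i, M i j * N i j = (Mᵀ * N) j j := by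
  simp [Matrix.mul_apply]

lemma col_sq_AQ (A : Matrix (Fin d) (Fin e) ℝ) (j : Fin e) :
    ∑ i, (A * QM A) i j ^ 2 = lamv A j := by
  have h : ∑ i, (A * QM A) i j * (A * QM A) i j = ((A * QM A)ᵀ * (A * QM A)) j j :=
    col_sum_eq _ _ j
  have h2 : (A * QM A)ᵀ * (A * QM A) = Matrix.diagonal (lamv A) := by
    have h3 := QM_conj A
    rw [Matrix.transpose_mul]
    simp only [Matrix.mul_assoc] at h3 ⊢
    exact h3
  simp only [sq]
  rw [h, h2, Matrix.diagonal_apply_eq]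

lemma singVal_le_specNorm (A : Matrix (Fin d) (Fin e) ℝ) (j : Fin e) :
    singVal A j ≤ specNorm A := by
  have : Nonempty (Fin e) := ⟨j⟩
  exact le_ciSup (Set.Finite.bddAbove (Set.finite_range _)) j

lemma specNorm_nonneg' (A : Matrix (Fin d) (Fin e) ℝ) (j : Fin e) : 0 ≤ specNorm A :=
  le_trans (Real.sqrt_nonneg _) (singVal_le_specNorm A j)

lemma mulVec_col {f : ℕ} (Z : Matrix (Fin d) (Fin e) ℝ) (Q : Matrix (Fin e) (Fin f) ℝ) (j : Fin f) :
    Z *ᵥ (fun k => Q k j) = fun i => (Z * Q) i j := by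
  funext i
  simp [Matrix.mulVec, Matrix.mul_apply, dotProduct]

lemma spec_vec_bound (Z : Matrix (Fin d) (Fin e) ℝ) (v : Fin e → ℝ) :
    ∑ i, (Z *ᵥ v) i ^ 2 ≤ specNorm Z ^ 2 * ∑ j, v j ^ 2 := by
  have h1 : ∑ i, (Z *ᵥ v) i ^ 2 = (Z *ᵥ v) ⬝ᵥ (Z *ᵥ v) := by
    simp [dotProduct, sq]
  have h2 : (Z *ᵥ v) ⬝ᵥ (Z *ᵥ v) = (Zᵀ *ᵥ (Z *ᵥ v)) ⬝ᵥ v := by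
    rw [dot_mv, dotProduct_comm]
  set Q := QM Z with hQ
  have h3 : Zᵀ *ᵥ (Z *ᵥ v) = (Q * Matrix.diagonal (lamv Z) * Qᵀ) *ᵥ v := by
    rw [Matrix.mulVec_mulVec, ← spectral]
  set c := Qᵀ *ᵥ v with hc
  have h4 : ((Q * Matrix.diagonal (lamv Z) * Qᵀ) *ᵥ v) ⬝ᵥ v
      = ∑ j, lamv Z j * c j ^ 2 := by
    rw [← Matrix.mulVec_mulVec, ← Matrix.mulVec_mulVec, dotProduct_comm, mv_dot]
    simp [dotProduct, Matrix.mulVec_diagonal, hc, sq]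
    apply Finset.sum_congr rfl; intro j _; ring
  have h5 : ∑ j, c j ^ 2 = ∑ j, v j ^ 2 := by
    have : ∑ j, c j ^ 2 = c ⬝ᵥ c := by simp [dotProduct, sq]
    rw [this, hc, dot_mv]
    rw [Matrix.transpose_transpose, Matrix.mulVec_mulVec, QM_mul_transpose, Matrix.one_mulVec]
    simp [dotProduct, sq]
  have h6 : ∀ j : Fin e, lamv Z j * c j ^ 2 ≤ specNorm Z ^ 2 * c j ^ 2 := by
    intro j
    have hl : lamv Z j ≤ specNorm Z ^ 2 := by
      have hs := singVal_le_specNorm Z j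
      have h0 := lamv_nonneg Z j
      have hsq : singVal Z j ^ 2 = lamv Z j := Real.sq_sqrt h0
      have hnn : 0 ≤ singVal Z j := Real.sqrt_nonneg _
      nlinarith
    exact mul_le_mul_of_nonneg_right hl (sq_nonneg _)
  calc ∑ i, (Z *ᵥ v) i ^ 2 = ∑ j, lamv Z j * c j ^ 2 := by rw [h1, h2, h3, h4]
    _ ≤ ∑ j, specNorm Z ^ 2 * c j ^ 2 := Finset.sum_le_sum fun j _ => h6 j
    _ = specNorm Z ^ 2 * ∑ j, v j ^ 2 := by rw [← Finset.mul_sum, h5]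

lemma specNorm_le (Z : Matrix (Fin d) (Fin e) ℝ) (cst : ℝ) (hc : 0 ≤ cst)
    (h : ∀ v : Fin e → ℝ, ∑ i, (Z *ᵥ v) i ^ 2 ≤ cst ^ 2 * ∑ j, v j ^ 2) :
    specNorm Z ≤ cst := by
  rcases isEmpty_or_nonempty (Fin e) with he | he
  · rw [specNorm, Real.iSup_of_isEmpty]
    exact hc
  · apply ciSup_le
    intro j
    have hv := h (fun k => QM Z k j)
    rw [mulVec_col] at hv
    have h1 : ∑ i, (Z * QM Z) i j ^ 2 = lamv Z j := col_sq_AQ Z j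
    have h2 : ∑ k, QM Z k j ^ 2 = 1 := by
      have : ∑ k, QM Z k j * QM Z k j = ((QM Z)ᵀ * QM Z) j j := col_sum_eq _ _ j
      simp only [sq]
      rw [this, transpose_mul_QM, Matrix.one_apply_eq]
    rw [h1, h2, mul_one] at hv
    have : singVal Z j = Real.sqrt (lamv Z j) := rfl
    rw [this]
    calc Real.sqrt (lamv Z j) ≤ Real.sqrt (cst ^ 2) := Real.sqrt_le_sqrt hv
      _ = cst := Real.sqrt_sq hc

lemma nucNorm_nonneg (A : Matrix (Fin d) (Fin e) ℝ) : 0 ≤ nucNorm A :=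
  Finset.sum_nonneg fun j _ => Real.sqrt_nonneg _

lemma trace_duality (Z A : Matrix (Fin d) (Fin e) ℝ) :
    minner Z A ≤ specNorm Z * nucNorm A := by
  rcases isEmpty_or_nonempty (Fin e) with he | he
  · have : minner Z A = 0 := by simp [minner]
    rw [this, nucNorm]
    simp
  · have hZA : minner (Z * QM A) (A * QM A) = minner Z A := by
      rw [minner_eq_trace, minner_eq_trace, Matrix.transpose_mul, Matrix.trace_mul_comm]
      simp only [Matrix.mul_assoc]
      rw [← Matrix.mul_assoc (QM A), QM_mul_transpose, Matrix.one_mul, Matrix.trace_mul_comm]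
    have hswap : minner (Z * QM A) (A * QM A)
        = ∑ j, ∑ i, (Z * QM A) i j * (A * QM A) i j := by
      rw [minner]; exact Finset.sum_comm
    have hcol : ∀ j : Fin e, ∑ i, (Z * QM A) i j * (A * QM A) i j
        ≤ specNorm Z * singVal A j := by
      intro j
      have hcs := Real.sum_mul_le_sqrt_mul_sqrt Finset.univ
        (fun i => (Z * QM A) i j) (fun i => (A * QM A) i j)
      have hA : Real.sqrt (∑ i, (A * QM A) i j ^ 2) = singVal A j := by
        rw [col_sq_AQ]; rfl
      have hZ : Real.sqrt (∑ i, (Z * QM A) i j ^ 2) ≤ specNorm Z := by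
        have hv := spec_vec_bound Z (fun k => QM A k j)
        rw [mulVec_col] at hv
        have h2 : ∑ k, QM A k j ^ 2 = 1 := by
          have h3 : ∑ k, QM A k j * QM A k j = ((QM A)ᵀ * QM A) j j := col_sum_eq _ _ j
          simp only [sq]
          rw [h3, transpose_mul_QM, Matrix.one_apply_eq]
        rw [h2, mul_one] at hv
        calc Real.sqrt (∑ i, (Z * QM A) i j ^ 2) ≤ Real.sqrt (specNorm Z ^ 2) :=
              Real.sqrt_le_sqrt hv
          _ = specNorm Z := Real.sqrt_sq (specNorm_nonneg' Z (Classical.arbitrary _))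
      calc ∑ i, (Z * QM A) i j * (A * QM A) i j
          ≤ Real.sqrt (∑ i, (Z * QM A) i j ^ 2) * Real.sqrt (∑ i, (A * QM A) i j ^ 2) := hcs
        _ ≤ specNorm Z * singVal A j := by
            rw [hA]
            exact mul_le_mul_of_nonneg_right hZ (Real.sqrt_nonneg _)
    calc minner Z A = ∑ j, ∑ i, (Z * QM A) i j * (A * QM A) i j := by rw [← hZA, hswap]
      _ ≤ ∑ j, specNorm Z * singVal A j := Finset.sum_le_sum fun j _ => hcol j
      _ = specNorm Z * nucNorm A := by rw [← Finset.mul_sum]; rfl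


lemma Qt_mulVec_Q_mulVec (A : Matrix (Fin d) (Fin e) ℝ) (x : Fin e → ℝ) :
    (QM A)ᵀ *ᵥ (QM A *ᵥ x) = x := by
  rw [Matrix.mulVec_mulVec, transpose_mul_QM, Matrix.one_mulVec]

lemma dot_Q_mulVec (A : Matrix (Fin d) (Fin e) ℝ) (x y : Fin e → ℝ) :
    (QM A *ᵥ x) ⬝ᵥ (QM A *ᵥ y) = x ⬝ᵥ y := by
  rw [dot_mv, Qt_mulVec_Q_mulVec]

lemma sum_sq_Qt (A : Matrix (Fin d) (Fin e) ℝ) (v : Fin e → ℝ) :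
    ∑ j, ((QM A)ᵀ *ᵥ v) j ^ 2 = ∑ j, v j ^ 2 := by
  have h : ((QM A)ᵀ *ᵥ v) ⬝ᵥ ((QM A)ᵀ *ᵥ v) = v ⬝ᵥ v := by
    rw [dot_mv, Matrix.transpose_transpose, Matrix.mulVec_mulVec, QM_mul_transpose,
      Matrix.one_mulVec]
  simpa [dotProduct, sq] using h

lemma exists_dual (A : Matrix (Fin d) (Fin d) ℝ) :
    ∃ W : Matrix (Fin d) (Fin d) ℝ,
      minner W A = nucNorm A ∧
      (∀ v : Fin d → ℝ, ∑ i, (W *ᵥ v) i ^ 2 ≤ ∑ j, v j ^ 2) ∧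
      (∀ (e : ℕ) (C : Matrix (Fin e) (Fin d) ℝ), C * A = 0 → C * W = 0) ∧
      (∀ (e : ℕ) (B : Matrix (Fin d) (Fin e) ℝ), A * B = 0 → W * B = 0) := by
  classical
  set dv : Fin d → ℝ := fun i => if 0 < lamv A i then (Real.sqrt (lamv A i))⁻¹ else 0 with hdv
  set D : Matrix (Fin d) (Fin d) ℝ := Matrix.diagonal dv with hD
  set K : Matrix (Fin d) (Fin d) ℝ := QM A * D * (QM A)ᵀ with hK
  have hlam : ∀ i, lamv A i * dv i ^ 2 ≤ 1 := by
    intro i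
    by_cases h : 0 < lamv A i
    · have ms : Real.sqrt (lamv A i) * Real.sqrt (lamv A i) = lamv A i :=
        Real.mul_self_sqrt (le_of_lt h)
      have hs : 0 < Real.sqrt (lamv A i) := Real.sqrt_pos.mpr h
      simp only [hdv, if_pos h]
      rw [sq, ← mul_inv]
      rw [ms]
      exact le_of_eq (mul_inv_cancel₀ (ne_of_gt h))
    · simp [hdv, if_neg h]
  refine ⟨A * K, ?_, ?_, ?_, ?_⟩
  · -- minner (A*K) A = nucNorm A
    rw [minner_mul_left, hK]
    have h1 : minner (QM A * D * (QM A)ᵀ) (Aᵀ * A)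
        = (D * Matrix.diagonal (lamv A)).trace := by
      rw [minner_eq_trace, spectral A]
      simp only [Matrix.transpose_mul, Matrix.transpose_transpose, hD,
        Matrix.diagonal_transpose, Matrix.mul_assoc]
      rw [Matrix.trace_mul_comm]
      simp only [Matrix.mul_assoc]
      rw [← Matrix.mul_assoc (QM A)ᵀ (QM A), transpose_mul_QM, Matrix.one_mul,
        Matrix.mul_one]
    rw [h1, hD, Matrix.diagonal_mul_diagonal, Matrix.trace_diagonal, nucNorm]
    apply Finset.sum_congr rfl
    intro i _
    by_cases h : 0 < lamv A i
    · have ms : Real.sqrt (lamv A i) * Real.sqrt (lamv A i) = lamv A i :=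
        Real.mul_self_sqrt (le_of_lt h)
      have hs : 0 < Real.sqrt (lamv A i) := Real.sqrt_pos.mpr h
      simp only [hdv, if_pos h, singVal_eq]
      rw [show (Real.sqrt (lamv A i))⁻¹ * lamv A i
          = (Real.sqrt (lamv A i))⁻¹ * (Real.sqrt (lamv A i) * Real.sqrt (lamv A i)) by rw [ms],
        ← mul_assoc, inv_mul_cancel₀ (ne_of_gt hs), one_mul]
    · have h0 : lamv A i = 0 := le_antisymm (not_lt.mp h) (lamv_nonneg A i)
      simp [hdv, if_neg h, singVal_eq, h0]
  · -- contraction property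
    intro v
    set c : Fin d → ℝ := (QM A)ᵀ *ᵥ v with hc
    set w : Fin d → ℝ := D *ᵥ c with hw
    have hexp : (A * K) *ᵥ v = A *ᵥ (QM A *ᵥ w) := by
      simp only [hw, hc, Matrix.mulVec_mulVec, hK, Matrix.mul_assoc]
    have hsum : ∑ i, ((A * K) *ᵥ v) i ^ 2 = ∑ j, lamv A j * w j ^ 2 := by
      have h1 : ∑ i, ((A * K) *ᵥ v) i ^ 2 = ((A * K) *ᵥ v) ⬝ᵥ ((A * K) *ᵥ v) := by
        simp [dotProduct, sq]
      rw [h1, hexp, dot_mv]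
      have e1 : Aᵀ *ᵥ (A *ᵥ (QM A *ᵥ w)) = QM A *ᵥ (Matrix.diagonal (lamv A) *ᵥ w) := by
        rw [Matrix.mulVec_mulVec (QM A *ᵥ w) Aᵀ A, spectral A,
          ← Matrix.mulVec_mulVec (QM A *ᵥ w) (QM A * Matrix.diagonal (lamv A)) (QM A)ᵀ,
          Qt_mulVec_Q_mulVec, ← Matrix.mulVec_mulVec w (QM A) (Matrix.diagonal (lamv A))]
      rw [e1, dot_Q_mulVec]
      simp only [dotProduct, Matrix.mulVec_diagonal]
      apply Finset.sum_congr rfl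
      intro j _
      ring
    rw [hsum]
    calc ∑ j, lamv A j * w j ^ 2 ≤ ∑ j, c j ^ 2 := by
          apply Finset.sum_le_sum
          intro j _
          have hwj : w j = dv j * c j := by
            simp [hw, hD, Matrix.mulVec_diagonal]
          rw [hwj]
          have := hlam j
          have hc2 : 0 ≤ c j ^ 2 := sq_nonneg _
          nlinarith
      _ = ∑ j, v j ^ 2 := by rw [hc]; exact sum_sq_Qt A v
  · intro e C hCA
    rw [← Matrix.mul_assoc, hCA, Matrix.zero_mul]
  · intro e B hAB
    have h1 : Aᵀ * A * B = 0 := by rw [Matrix.mul_assoc, hAB, Matrix.mul_zero]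
    rw [spectral A] at h1
    simp only [Matrix.mul_assoc] at h1
    have h2 : Matrix.diagonal (lamv A) * ((QM A)ᵀ * B) = 0 := by
      have h3 := congrArg (fun M => (QM A)ᵀ * M) h1
      simp only [Matrix.mul_zero] at h3
      rwa [← Matrix.mul_assoc, transpose_mul_QM, Matrix.one_mul] at h3
    have h4 : D * ((QM A)ᵀ * B) = 0 := by
      ext i j
      have h5 : lamv A i * ((QM A)ᵀ * B) i j = 0 := by
        have := congrFun (congrFun h2 i) j
        simpa [Matrix.diagonal_mul] using this
      simp only [hD, Matrix.diagonal_mul, Matrix.zero_apply]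
      by_cases h : 0 < lamv A i
      · have : ((QM A)ᵀ * B) i j = 0 := by
          rcases mul_eq_zero.mp h5 with h' | h'
          · exact absurd h' (ne_of_gt h)
          · exact h'
        simp [this]
      · simp [hdv, if_neg h]
    calc A * K * B = A * (QM A * (D * ((QM A)ᵀ * B))) := by
          simp only [hK, Matrix.mul_assoc]
      _ = 0 := by rw [h4, Matrix.mul_zero, Matrix.mul_zero]


lemma minner_zero_right (A : Matrix (Fin d) (Fin e) ℝ) : minner A 0 = 0 := by simp [minner]

lemma nucNorm_UV_le {n r : ℕ} (U V : Matrix (Fin n) (Fin r) ℝ) (Sg : Fin r → ℝ)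
    (hU : Uᵀ * U = 1) (hV : Vᵀ * V = 1) (hSg : ∀ i, 0 ≤ Sg i) :
    nucNorm (U * Matrix.diagonal Sg * Vᵀ) ≤ ∑ i, Sg i := by
  obtain ⟨W, hW1, hW2, -, -⟩ := exists_dual (U * Matrix.diagonal Sg * Vᵀ)
  rw [← hW1]
  have hcolU : ∀ i : Fin r, ∑ b, U b i ^ 2 = 1 := by
    intro i
    have h := col_sum_eq U U i
    rw [hU, Matrix.one_apply_eq] at h
    simpa [sq] using h
  have hcolV : ∀ i : Fin r, ∑ b, V b i ^ 2 = 1 := by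
    intro i
    have h := col_sum_eq V V i
    rw [hV, Matrix.one_apply_eq] at h
    simpa [sq] using h
  have hrw : minner W (U * Matrix.diagonal Sg * Vᵀ)
      = ∑ i, Sg i * (∑ j, (Uᵀ * W) i j * V j i) := by
    rw [minner_comm, Matrix.mul_assoc, minner_mul_left, minner_mul_left,
      Matrix.diagonal_transpose]
    rw [minner]
    apply Finset.sum_congr rfl
    intro i _
    rw [Finset.mul_sum]
    apply Finset.sum_congr rfl
    intro j _
    simp [Matrix.diagonal_mul, Matrix.transpose_apply]
    ring
  rw [hrw]
  apply Finset.sum_le_sum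
  intro i _
  have halpha : ∑ j, (Uᵀ * W) i j * V j i ≤ 1 := by
    have hform : ∑ j, (Uᵀ * W) i j * V j i = ∑ b, U b i * (W *ᵥ (fun a => V a i)) b := by
      rw [mulVec_col]
      simp only [Matrix.mul_apply, Matrix.transpose_apply, Finset.sum_mul, Finset.mul_sum]
      rw [Finset.sum_comm]
      apply Finset.sum_congr rfl; intro p _; apply Finset.sum_congr rfl; intro q _; ring
    rw [hform]
    have hcs := Real.sum_mul_le_sqrt_mul_sqrt Finset.univ
      (fun b => U b i) (fun b => (W *ᵥ (fun a => V a i)) b)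
    have h1 : Real.sqrt (∑ b, U b i ^ 2) = 1 := by rw [hcolU i, Real.sqrt_one]
    have h2 : Real.sqrt (∑ b, (W *ᵥ (fun a => V a i)) b ^ 2) ≤ 1 := by
      have := hW2 (fun a => V a i)
      calc Real.sqrt (∑ b, (W *ᵥ (fun a => V a i)) b ^ 2)
          ≤ Real.sqrt (∑ a, V a i ^ 2) := Real.sqrt_le_sqrt this
        _ = 1 := by rw [hcolV i, Real.sqrt_one]
    calc ∑ b, U b i * (W *ᵥ (fun a => V a i)) b
        ≤ Real.sqrt (∑ b, U b i ^ 2) * Real.sqrt (∑ b, (W *ᵥ (fun a => V a i)) b ^ 2) := hcs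
      _ ≤ 1 := by rw [h1, one_mul]; exact h2
  calc Sg i * (∑ j, (Uᵀ * W) i j * V j i) ≤ Sg i * 1 :=
        mul_le_mul_of_nonneg_left halpha (hSg i)
    _ = Sg i := mul_one _

section ProjLemmas

variable {n r : ℕ} (U V : Matrix (Fin n) (Fin r) ℝ)

lemma Ut_projTperp (hU : Uᵀ * U = 1) (X : Matrix (Fin n) (Fin n) ℝ) :
    Uᵀ * projTperp U V X = 0 := by
  have hU' : ∀ (m : ℕ) (M : Matrix (Fin r) (Fin m) ℝ), Uᵀ * (U * M) = M := by
    intro m M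
    rw [← Matrix.mul_assoc, hU, Matrix.one_mul]
  simp only [projTperp, projT, Matrix.mul_sub, Matrix.mul_add, Matrix.mul_assoc, hU']
  abel

lemma projTperp_V (hV : Vᵀ * V = 1) (X : Matrix (Fin n) (Fin n) ℝ) :
    projTperp U V X * V = 0 := by
  have hV' : ∀ (m : ℕ) (M : Matrix (Fin m) (Fin r) ℝ), M * Vᵀ * V = M := by
    intro m M
    rw [Matrix.mul_assoc, hV, Matrix.mul_one]
  simp only [projTperp, projT, Matrix.sub_mul, Matrix.add_mul, Matrix.mul_assoc]
  simp only [← Matrix.mul_assoc, hV']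
  abel

lemma projT_form (X : Matrix (Fin n) (Fin n) ℝ) :
    projT U V X = U * (Uᵀ * X) + ((X - U * (Uᵀ * X)) * V) * Vᵀ := by
  simp only [projT, Matrix.sub_mul, Matrix.mul_assoc]
  abel

lemma projT_add_perp (X : Matrix (Fin n) (Fin n) ℝ) :
    projT U V X + projTperp U V X = X := by
  simp only [projTperp]
  abel

lemma minner_U_perp (hU : Uᵀ * U = 1) (C : Matrix (Fin r) (Fin n) ℝ)
    (Y : Matrix (Fin n) (Fin n) ℝ) : minner (U * C) (projTperp U V Y) = 0 := by
  rw [minner_mul_left, Ut_projTperp U V hU, minner_zero_right]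

lemma minner_Vt_perp (hV : Vᵀ * V = 1) (C : Matrix (Fin n) (Fin r) ℝ)
    (Y : Matrix (Fin n) (Fin n) ℝ) : minner (C * Vᵀ) (projTperp U V Y) = 0 := by
  rw [minner_mul_right, Matrix.transpose_transpose, projTperp_V U V hV, minner_zero_right]

lemma minner_projT_perp (hU : Uᵀ * U = 1) (hV : Vᵀ * V = 1)
    (X Y : Matrix (Fin n) (Fin n) ℝ) : minner (projT U V X) (projTperp U V Y) = 0 := by
  rw [projT_form, minner_add_left, minner_U_perp U V hU, minner_Vt_perp U V hV, add_zero]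

lemma minner_decomp (hU : Uᵀ * U = 1) (hV : Vᵀ * V = 1) (X Y : Matrix (Fin n) (Fin n) ℝ) :
    minner X Y = minner (projT U V X) (projT U V Y)
      + minner (projTperp U V X) (projTperp U V Y) := by
  have h : minner (projT U V X + projTperp U V X) (projT U V Y + projTperp U V Y)
      = minner X Y := by rw [projT_add_perp, projT_add_perp]
  rw [← h, minner_add_left, minner_add_right, minner_add_right,
    minner_projT_perp U V hU hV, minner_comm (projTperp U V X) (projT U V Y),
    minner_projT_perp U V hU hV]
  ring

end ProjLemmas

lemma POmega_add {n : ℕ} (S : Set (Fin n × Fin n)) (X Y : Matrix (Fin n) (Fin n) ℝ) :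
    POmega S (X + Y) = POmega S X + POmega S Y := by
  classical
  funext i j
  by_cases h : (i, j) ∈ S <;> simp [POmega, h]

lemma minner_POmega (S : Set (Fin n × Fin n)) (X Y : Matrix (Fin n) (Fin n) ℝ) :
    minner (POmega S X) Y = minner (POmega S X) (POmega S Y) := by
  classical
  apply Finset.sum_congr rfl
  intro i _
  apply Finset.sum_congr rfl
  intro j _
  by_cases h : (i, j) ∈ S <;> simp [POmega, h]

lemma frobNorm_UV {n r : ℕ} (U V : Matrix (Fin n) (Fin r) ℝ)
    (hU : Uᵀ * U = 1) (hV : Vᵀ * V = 1) :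
    frobNorm (U * Vᵀ) = Real.sqrt r := by
  rw [frobNorm_eq_sqrt]
  congr 1
  rw [minner_mul_left, ← Matrix.mul_assoc, hU, Matrix.one_mul]
  have h : minner Vᵀ Vᵀ = minner V V := by
    rw [minner]; rw [minner]
    rw [Finset.sum_comm]
    rfl
  rw [h, minner_eq_trace, hV, Matrix.trace_one]
  simp

end SqrtMC

/-- Bound on the change of the data-fit term between the convex
minimizer and the nonconvex point. -/
theorem sqrtMC_data_fit_change_bound (n r : ℕ) (hn : 0 < n) (hr : 0 < r) (lam : ℝ)
    (hlam : 0 < lam) (Ω : Set (Fin n × Fin n)) (M : Matrix (Fin n) (Fin n) ℝ)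
    (U V : Matrix (Fin n) (Fin r) ℝ) (Sg : Fin r → ℝ)
    (Lncvx R Lcvx : Matrix (Fin n) (Fin n) ℝ)
    -- compact SVD of `L_ncvx` (in particular it has rank `r`)
    (hSVD : Lncvx = U * Matrix.diagonal Sg * Vᵀ)
    (hU : Uᵀ * U = 1) (hV : Vᵀ * V = 1) (hSg : ∀ i, 0 < Sg i)
    -- positive residual `θ` and definition of `R`
    (hθ : 0 < frobNorm (POmega Ω (Lncvx - M)))
    (hR : (frobNorm (POmega Ω (Lncvx - M)))⁻¹ • POmega Ω (Lncvx - M) =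
      (-lam) • (U * Vᵀ + R))
    (hRperp : specNorm (projTperp U V R) ≤ 1 / 2)
    -- `L_cvx` minimizes the convex objective `F`
    (hmin : ∀ L : Matrix (Fin n) (Fin n) ℝ, sqF Ω M lam Lcvx ≤ sqF Ω M lam L) :
    (frobNorm (POmega Ω (Lcvx - M)) - frobNorm (POmega Ω (Lncvx - M))) ^ 2 ≤
      lam ^ 2 * (Real.sqrt r + 2 * frobNorm (projT U V R)) ^ 2 *
        frobNorm (projT U V (Lcvx - Lncvx)) ^ 2 := by
  open SqrtMC in
  classical
  set Δ : Matrix (Fin n) (Fin n) ℝ := Lcvx - Lncvx with hΔ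
  set PD : Matrix (Fin n) (Fin n) ℝ := projT U V Δ with hPD
  set AP : Matrix (Fin n) (Fin n) ℝ := projTperp U V Δ with hAP
  set θn : ℝ := frobNorm (POmega Ω (Lncvx - M)) with hθn
  set θc : ℝ := frobNorm (POmega Ω (Lcvx - M)) with hθc
  set ρ : ℝ := frobNorm (projT U V R) with hρdef
  set a : ℝ := frobNorm PD with hadef
  obtain ⟨W, hW1, hW2, hWl, hWr⟩ := exists_dual AP
  have hSg' : ∀ i, 0 ≤ Sg i := fun i => (hSg i).le
  have hUAP : Uᵀ * AP = 0 := Ut_projTperp U V hU Δ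
  have hAPV : AP * V = 0 := projTperp_V U V hV Δ
  have hUW : Uᵀ * W = 0 := hWl r Uᵀ hUAP
  have hWV : W * V = 0 := hWr r V hAPV
  set Z : Matrix (Fin n) (Fin n) ℝ := U * Vᵀ + W with hZ
  -- spectral norm of Z is at most 1
  have hisoU : ∀ x y : Fin r → ℝ, (U *ᵥ x) ⬝ᵥ (U *ᵥ y) = x ⬝ᵥ y := by
    intro x y
    rw [dot_mv, Matrix.mulVec_mulVec, hU, Matrix.one_mulVec]
  have hisoV : ∀ x y : Fin r → ℝ, (V *ᵥ x) ⬝ᵥ (V *ᵥ y) = x ⬝ᵥ y := by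
    intro x y
    rw [dot_mv, Matrix.mulVec_mulVec, hV, Matrix.one_mulVec]
  have hspecZ : specNorm Z ≤ 1 := by
    apply specNorm_le Z 1 zero_le_one
    intro v
    rw [one_pow]
    set cv : Fin r → ℝ := Vᵀ *ᵥ v with hcv
    have hzv : Z *ᵥ v = U *ᵥ cv + W *ᵥ v := by
      rw [hZ, Matrix.add_mulVec, ← Matrix.mulVec_mulVec]
    have hcross : (U *ᵥ cv) ⬝ᵥ (W *ᵥ v) = 0 := by
      rw [dot_mv, Matrix.mulVec_mulVec, hUW, Matrix.zero_mulVec, dotProduct_zero]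
    have hWle : (W *ᵥ v) ⬝ᵥ (W *ᵥ v) ≤ v ⬝ᵥ v - cv ⬝ᵥ cv := by
      set y : Fin n → ℝ := v - V *ᵥ cv with hy
      have hWy : W *ᵥ y = W *ᵥ v := by
        rw [hy, Matrix.mulVec_sub, Matrix.mulVec_mulVec, hWV, Matrix.zero_mulVec, sub_zero]
      have hyy : y ⬝ᵥ y = v ⬝ᵥ v - cv ⬝ᵥ cv := by
        rw [hy]
        rw [sub_dotProduct, dotProduct_sub, dotProduct_sub]
        rw [hisoV cv cv]
        have e1 : v ⬝ᵥ (V *ᵥ cv) = cv ⬝ᵥ cv := by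
          rw [mv_dot, hcv]
        have e2 : (V *ᵥ cv) ⬝ᵥ v = cv ⬝ᵥ cv := by
          rw [dotProduct_comm]; exact e1
        rw [e1, e2]; ring
      have h2 := hW2 y
      have hly : ∑ i, (W *ᵥ y) i ^ 2 = (W *ᵥ v) ⬝ᵥ (W *ᵥ v) := by
        rw [hWy]; simp [dotProduct, sq]
      have hry : ∑ j, y j ^ 2 = y ⬝ᵥ y := by simp [dotProduct, sq]
      rw [hly, hry, hyy] at h2
      exact h2
    have hZvZv : ∑ i, (Z *ᵥ v) i ^ 2 = (Z *ᵥ v) ⬝ᵥ (Z *ᵥ v) := by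
      simp [dotProduct, sq]
    have hvv : ∑ j, v j ^ 2 = v ⬝ᵥ v := by simp [dotProduct, sq]
    rw [hZvZv, hvv, hzv]
    rw [add_dotProduct, dotProduct_add, dotProduct_add]
    rw [hisoU cv cv, hcross, dotProduct_comm (W *ᵥ v) (U *ᵥ cv), hcross]
    rw [one_mul]
    linarith [hWle]
  -- useful inner product computations
  have hUVD : minner (U * Vᵀ) Δ = minner (U * Vᵀ) PD := by
    conv_lhs => rw [← projT_add_perp U V Δ]
    rw [minner_add_right, ← hPD, ← hAP, minner_U_perp U V hU, add_zero]
  have hWPD : minner W PD = 0 := by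
    rw [hPD, projT_form U V Δ, minner_add_right]
    have t1 : minner W (U * (Uᵀ * Δ)) = 0 := by
      rw [minner_comm, minner_mul_left, hUW, minner_zero_right]
    have t2 : minner W ((Δ - U * (Uᵀ * Δ)) * V * Vᵀ) = 0 := by
      rw [minner_comm, minner_mul_right, Matrix.transpose_transpose, hWV, minner_zero_right]
    rw [t1, t2, add_zero]
  have hWD : minner W Δ = nucNorm AP := by
    conv_lhs => rw [← projT_add_perp U V Δ]
    rw [minner_add_right, ← hPD, ← hAP, hWPD, hW1, zero_add]
  have hUVn : minner (U * Vᵀ) Lncvx = ∑ i, Sg i := by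
    rw [hSVD, minner_mul_left, ← Matrix.mul_assoc, ← Matrix.mul_assoc, hU, Matrix.one_mul]
    rw [minner_eq_trace, Matrix.transpose_transpose, Matrix.trace_mul_comm, Matrix.mul_assoc,
      hV, Matrix.mul_one, Matrix.trace_diagonal]
  have hWn : minner W Lncvx = 0 := by
    rw [hSVD, Matrix.mul_assoc, minner_comm, minner_mul_left, hUW, minner_zero_right]
  have hZn : minner Z Lncvx = ∑ i, Sg i := by
    rw [hZ, minner_add_left, hUVn, hWn, add_zero]
  have hZD : minner Z Δ = minner (U * Vᵀ) PD + nucNorm AP := by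
    rw [hZ, minner_add_left, hUVD, hWD]
  have hZc : minner Z Lcvx = minner Z Lncvx + minner Z Δ := by
    rw [← minner_add_right]
    congr 1
    rw [hΔ]; abel
  -- upper bound
  set u0 : ℝ := minner (U * Vᵀ) PD with hu0
  set q : ℝ := nucNorm AP with hq
  have hNup : nucNorm Lncvx ≤ ∑ i, Sg i := by
    rw [hSVD]; exact nucNorm_UV_le U V Sg hU hV hSg'
  have htd : minner Z Lcvx ≤ nucNorm Lcvx := by
    calc minner Z Lcvx ≤ specNorm Z * nucNorm Lcvx := trace_duality Z Lcvx
      _ ≤ 1 * nucNorm Lcvx := mul_le_mul_of_nonneg_right hspecZ (nucNorm_nonneg _)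
      _ = nucNorm Lcvx := one_mul _
  have hZcval : minner Z Lcvx = (∑ i, Sg i) + (u0 + q) := by
    rw [hZc, hZn, hZD]
  have hmine := hmin Lncvx
  simp only [sqF] at hmine
  rw [← hθn, ← hθc] at hmine
  have hs_up : θc - θn ≤ -(lam * u0) - lam * q := by
    have hA : lam * nucNorm Lncvx ≤ lam * (∑ i, Sg i) :=
      mul_le_mul_of_nonneg_left hNup hlam.le
    have hB : lam * ((∑ i, Sg i) + (u0 + q)) ≤ lam * nucNorm Lcvx := by
      rw [← hZcval]
      exact mul_le_mul_of_nonneg_left htd hlam.le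
    have hexp : lam * ((∑ i, Sg i) + (u0 + q))
        = lam * (∑ i, Sg i) + lam * u0 + lam * q := by ring
    rw [hexp] at hB
    linarith [hmine, hA, hB]
  -- lower bound
  have hPc : POmega Ω (Lcvx - M) = POmega Ω (Lncvx - M) + POmega Ω Δ := by
    rw [← POmega_add]
    congr 1
    rw [hΔ]; abel
  have hCS : minner (POmega Ω (Lncvx - M)) (POmega Ω (Lcvx - M)) ≤ θn * θc :=
    minner_cs _ _
  have hinner : minner (POmega Ω (Lncvx - M)) (POmega Ω (Lcvx - M))
      = θn ^ 2 + minner (POmega Ω (Lncvx - M)) Δ := by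
    rw [hPc, minner_add_right, minner_self, ← minner_POmega, hθn]
  have hPn : POmega Ω (Lncvx - M) = (θn * -lam) • (U * Vᵀ + R) := by
    have h1 := congrArg (fun X : Matrix (Fin n) (Fin n) ℝ => θn • X) hR
    simp only [smul_smul] at h1
    rw [mul_inv_cancel₀ (ne_of_gt hθ)] at h1
    rw [one_smul] at h1
    exact h1
  have hmval : minner (U * Vᵀ + R) Δ
      = u0 + (minner (projT U V R) PD + minner (projTperp U V R) AP) := by
    rw [minner_add_left, hUVD]
    congr 1
    rw [minner_decomp U V hU hV R Δ, ← hPD, ← hAP]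
  have hPnD : minner (POmega Ω (Lncvx - M)) Δ
      = (θn * -lam) * (u0 + (minner (projT U V R) PD + minner (projTperp U V R) AP)) := by
    rw [hPn, minner_smul_left, hmval]
  set m1 : ℝ := minner (projT U V R) PD with hm1
  set m2 : ℝ := minner (projTperp U V R) AP with hm2
  have hlow : θn - lam * (u0 + (m1 + m2)) ≤ θc := by
    have h5 : θn * (θn - lam * (u0 + (m1 + m2))) ≤ θn * θc := by
      have : θn * (θn - lam * (u0 + (m1 + m2)))
          = θn ^ 2 + (θn * -lam) * (u0 + (m1 + m2)) := by ring
      rw [this, ← hPnD, ← hinner]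
      exact hCS
    exact le_of_mul_le_mul_left h5 hθ
  -- bounds on the pieces
  have hm1b : m1 ≤ ρ * a := by
    rw [hm1, hρdef, hadef]
    exact minner_cs _ _
  have hm2b : m2 ≤ (1 / 2) * q := by
    rw [hm2, hq]
    calc minner (projTperp U V R) AP ≤ specNorm (projTperp U V R) * nucNorm AP :=
          trace_duality _ _
      _ ≤ (1 / 2) * nucNorm AP := mul_le_mul_of_nonneg_right hRperp (nucNorm_nonneg _)
  have hu0b := abs_minner_le (U * Vᵀ) PD
  rw [frobNorm_UV U V hU hV, ← hadef, ← hu0] at hu0b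
  obtain ⟨hu0lo, hu0hi⟩ := abs_le.mp hu0b
  have hqnn : 0 ≤ q := nucNorm_nonneg _
  have hann : 0 ≤ a := frobNorm_nonneg _
  have hρnn : 0 ≤ ρ := frobNorm_nonneg _
  have hrnn : 0 ≤ Real.sqrt r := Real.sqrt_nonneg _
  -- final arithmetic
  have hs_lo : -(lam * u0) - lam * (ρ * a) - lam * q / 2 ≤ θc - θn := by
    have e1 : lam * m1 ≤ lam * (ρ * a) := mul_le_mul_of_nonneg_left hm1b hlam.le
    have e2 : lam * m2 ≤ lam * ((1 / 2) * q) := mul_le_mul_of_nonneg_left hm2b hlam.le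
    have hex : lam * (u0 + (m1 + m2)) = lam * u0 + lam * m1 + lam * m2 := by ring
    have hex2 : lam * ((1 / 2) * q) = lam * q / 2 := by ring
    linarith [hlow, e1, e2, hex, hex2]
  have hX1hi : lam * u0 ≤ lam * (Real.sqrt r * a) := mul_le_mul_of_nonneg_left hu0hi hlam.le
  have hX1lo : -(lam * (Real.sqrt r * a)) ≤ lam * u0 := by
    have h := mul_le_mul_of_nonneg_left hu0lo hlam.le
    have hex : lam * -(Real.sqrt ↑r * a) = -(lam * (Real.sqrt ↑r * a)) := by ring
    linarith [h, hex]
  have hX2 : 0 ≤ lam * q := mul_nonneg hlam.le hqnn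
  have hX3 : 0 ≤ lam * (ρ * a) := mul_nonneg hlam.le (mul_nonneg hρnn hann)
  have hub : θc - θn ≤ lam * (Real.sqrt r * a) + 2 * (lam * (ρ * a)) := by linarith
  have hlb : -(lam * (Real.sqrt r * a) + 2 * (lam * (ρ * a))) ≤ θc - θn := by linarith
  have hsq := sq_le_sq' hlb hub
  calc (θc - θn) ^ 2 ≤ (lam * (Real.sqrt r * a) + 2 * (lam * (ρ * a))) ^ 2 := hsq
    _ = lam ^ 2 * (Real.sqrt r + 2 * ρ) ^ 2 * a ^ 2 := by ring
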